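/- There exists a constant C depending only on p and q such that for every linear map A : ℝ^p → ℝ^q, the curve s ↦ P(graph(s·A)) of orthogonal projections of ℝ^{p+q} onto the graphs graph(s·A) = {(x, s·A x) : x ∈ ℝ^p} ⊆ ℝ^p × ℝ^q = ℝ^{p+q} has total variation at most C over s ∈ ℝ, uniformly in A: for every finite partition s_0 < ... < s_k of ℝ, Σ_{j} ‖P(graph(s_{j+1}A)) − P(graph(s_j A))‖ ≤ C. (These curves are, up to the reparametrization s = 1/t, exactly the trajectories {(\tfrac{1}{t}\alpha_x, \alpha_x) : 0 < t < ∞} of the Harvey–Lawson multiplicative flow φ_t(e,f) = (te,f) through the graph of a linear map, the case of Theorem 3 needed for Theorem 2.) -/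

import Mathlib

open Finset

/-- `ℝ^{p+q}` as the `ℓ²`-product `ℝ^p × ℝ^q`. -/
abbrev EucProd (p q : ℕ) := WithLp 2 (EuclideanSpace ℝ (Fin p) × EuclideanSpace ℝ (Fin q))

/-- The graph `{(x, A x) : x ∈ ℝ^p}` of a linear map `A : ℝ^p → ℝ^q`, as a subspace of
`ℝ^{p+q} = ℝ^p × ℝ^q`. -/
noncomputable def graphSub {p q : ℕ}
    (A : EuclideanSpace ℝ (Fin p) →ₗ[ℝ] EuclideanSpace ℝ (Fin q)) :
    Submodule ℝ (EucProd p q) :=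
  (LinearMap.graph A).comap (WithLp.linearEquiv 2 ℝ _).toLinearMap

/-- The orthogonal projection of `ℝ^{p+q}` onto a subspace `V`, as an endomorphism. -/
noncomputable def projOnto {p q : ℕ} (V : Submodule ℝ (EucProd p q)) :
    EucProd p q →L[ℝ] EucProd p q :=
  V.subtypeL ∘L V.orthogonalProjection

section Aux

open scoped RealInnerProductSpace

variable {p q : ℕ}

namespace MFT

/-- Scalar helper: `cos(arctan a) cos(arctan b) (1 + ab) = cos (arctan a - arctan b)`. -/
lemma cos_arctan_helper (a b : ℝ) :
    Real.cos (Real.arctan a) * Real.cos (Real.arctan b) * (1 + a * b)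
      = Real.cos (Real.arctan a - Real.arctan b) := by
  rw [Real.cos_sub, Real.sin_arctan, Real.sin_arctan, Real.cos_arctan, Real.cos_arctan]
  have h1 : (0:ℝ) < Real.sqrt (1 + a ^ 2) := Real.sqrt_pos.2 (by positivity)
  have h2 : (0:ℝ) < Real.sqrt (1 + b ^ 2) := Real.sqrt_pos.2 (by positivity)
  field_simp

/-- Scalar helper: `2 - 2 cos t ≤ t ^ 2`. -/
lemma two_sub_two_cos_le (t : ℝ) : 2 - 2 * Real.cos t ≤ t ^ 2 := by
  have h : Real.cos t = 1 - 2 * Real.sin (t / 2) ^ 2 := by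
    have := Real.cos_sq' (t / 2)
    have h2 := Real.cos_two_mul (t / 2)
    rw [show 2 * (t / 2) = t by ring] at h2
    rw [h2, this]; ring
  have hs : Real.sin (t / 2) ^ 2 ≤ (t / 2) ^ 2 := Real.sin_sq_le_sq
  nlinarith

/-- Telescoping sums over `Fin`. -/
lemma telescope : ∀ (k : ℕ) (f : Fin (k + 1) → ℝ),
    ∑ j : Fin k, (f j.succ - f j.castSucc) = f (Fin.last k) - f 0 := by
  intro k
  induction k with
  | zero => intro f; simp
  | succ k ih =>
    intro f
    rw [Fin.sum_univ_castSucc]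
    have h := ih (fun j => f j.castSucc)
    have e1 : ∀ j : Fin k, f (j.castSucc).succ - f (j.castSucc).castSucc
        = f (j.succ).castSucc - f (j.castSucc).castSucc := by
      intro j; rw [Fin.succ_castSucc]
    calc (∑ j : Fin k, (f (j.castSucc).succ - f (j.castSucc).castSucc))
          + (f (Fin.last k).succ - f (Fin.last k).castSucc)
        = (∑ j : Fin k, (f (j.succ).castSucc - f (j.castSucc).castSucc))
          + (f (Fin.last k).succ - f (Fin.last k).castSucc) := by
          rw [Finset.sum_congr rfl (fun j _ => e1 j)]
      _ = (f (Fin.last k).castSucc - f (Fin.castSucc 0))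
          + (f (Fin.last k).succ - f (Fin.last k).castSucc) := by rw [h]
      _ = f (Fin.last (k + 1)) - f 0 := by
          rw [Fin.succ_last]
          simp [Fin.castSucc_zero]

variable (A : EuclideanSpace ℝ (Fin p) →ₗ[ℝ] EuclideanSpace ℝ (Fin q))

/-- The symmetric operator `AᵀA`. -/
noncomputable def Tmap : EuclideanSpace ℝ (Fin p) →ₗ[ℝ] EuclideanSpace ℝ (Fin p) :=
  (LinearMap.adjoint A) ∘ₗ A

lemma Tsymm : (Tmap A).IsSymmetric := by
  intro x y
  simp only [Tmap, LinearMap.comp_apply]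
  rw [LinearMap.adjoint_inner_left, LinearMap.adjoint_inner_right]

/-- An orthonormal eigenbasis of `AᵀA`. -/
noncomputable def eb : OrthonormalBasis (Fin p) ℝ (EuclideanSpace ℝ (Fin p)) :=
  (Tsymm A).eigenvectorBasis finrank_euclideanSpace_fin

/-- The eigenvalues of `AᵀA`. -/
noncomputable def ev : Fin p → ℝ :=
  (Tsymm A).eigenvalues finrank_euclideanSpace_fin

lemma Tmap_apply_eb (i : Fin p) : Tmap A (eb A i) = ev A i • eb A i := by
  have := (Tsymm A).apply_eigenvectorBasis finrank_euclideanSpace_fin i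
  simpa [eb, ev] using this

lemma inner_A_eb (i j : Fin p) :
    ⟪A (eb A i), A (eb A j)⟫ = if i = j then ev A i else 0 := by
  have h1 : ⟪A (eb A i), A (eb A j)⟫ = ⟪eb A i, Tmap A (eb A j)⟫ := by
    simp only [Tmap, LinearMap.comp_apply]
    rw [LinearMap.adjoint_inner_right]
  rw [h1, Tmap_apply_eb, real_inner_smul_right]
  have := (eb A).orthonormal
  rcases eq_or_ne i j with rfl | hij
  · have h2 : ⟪eb A i, eb A i⟫ = (1:ℝ) := by
      rw [real_inner_self_eq_norm_sq, this.1 i]; norm_num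
    rw [h2]; simp
  · rw [this.2 hij]; simp [hij]

lemma ev_nonneg (i : Fin p) : 0 ≤ ev A i := by
  have h := inner_A_eb A i i
  rw [if_pos rfl] at h
  rw [← h]
  exact real_inner_self_nonneg

/-- The angle `arctan(s σᵢ)`. -/
noncomputable def theta (s : ℝ) (i : Fin p) : ℝ :=
  Real.arctan (s * Real.sqrt (ev A i))

lemma theta_mono (i : Fin p) : Monotone fun s => theta A s i := by
  intro s s' hss
  exact Real.arctan_strictMono.monotone
    (mul_le_mul_of_nonneg_right hss (Real.sqrt_nonneg _))

lemma theta_sub_le (s s' : ℝ) (i : Fin p) : theta A s' i - theta A s i ≤ Real.pi := by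
  have h1 := Real.arctan_lt_pi_div_two (s' * Real.sqrt (ev A i))
  have h2 := Real.neg_pi_div_two_lt_arctan (s * Real.sqrt (ev A i))
  unfold theta
  linarith

/-- An orthonormal basis vector of `graph(s • A)`. -/
noncomputable def Wv (s : ℝ) (i : Fin p) : EucProd p q :=
  Real.cos (theta A s i) •
    (WithLp.equiv 2 (EuclideanSpace ℝ (Fin p) × EuclideanSpace ℝ (Fin q))).symm
      (eb A i, s • A (eb A i))

lemma inner_Wv (s s' : ℝ) (i j : Fin p) :
    ⟪Wv A s i, Wv A s' j⟫ =
      if i = j then Real.cos (theta A s i - theta A s' i) else 0 := by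
  have horth := (eb A).orthonormal
  have hbase : ⟪Wv A s i, Wv A s' j⟫ =
      Real.cos (theta A s i) * Real.cos (theta A s' j) *
        (⟪eb A i, eb A j⟫ + s * s' * ⟪A (eb A i), A (eb A j)⟫) := by
    simp only [Wv, real_inner_smul_left, real_inner_smul_right,
      WithLp.prod_inner_apply, WithLp.smul_fst, WithLp.smul_snd,
      WithLp.equiv_symm_apply, WithLp.ofLp_smul, WithLp.ofLp_toLp, Prod.smul_fst,
      Prod.smul_snd]
    ring
  rcases eq_or_ne i j with rfl | hij
  · have h2 : ⟪eb A i, eb A i⟫ = (1:ℝ) := by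
      rw [real_inner_self_eq_norm_sq, horth.1 i]; norm_num
    rw [hbase, h2, inner_A_eb, if_pos rfl]
    have hss : Real.sqrt (ev A i) * Real.sqrt (ev A i) = ev A i :=
      Real.mul_self_sqrt (ev_nonneg A i)
    have hab : (s * Real.sqrt (ev A i)) * (s' * Real.sqrt (ev A i)) = s * s' * ev A i := by
      calc (s * Real.sqrt (ev A i)) * (s' * Real.sqrt (ev A i))
          = s * s' * (Real.sqrt (ev A i) * Real.sqrt (ev A i)) := by ring
        _ = s * s' * ev A i := by rw [hss]
    have := cos_arctan_helper (s * Real.sqrt (ev A i)) (s' * Real.sqrt (ev A i))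
    rw [hab] at this
    simpa [theta] using this
  · rw [hbase, horth.2 hij, inner_A_eb, if_neg hij, if_neg hij]
    ring

lemma norm_Wv (s : ℝ) (i : Fin p) : ‖Wv A s i‖ = 1 := by
  have h := inner_Wv A s s i i
  rw [if_pos rfl, sub_self, Real.cos_zero, real_inner_self_eq_norm_sq] at h
  have hn := norm_nonneg (Wv A s i)
  nlinarith

lemma norm_Wv_sub (s s' : ℝ) (i : Fin p) :
    ‖Wv A s' i - Wv A s i‖ ≤ |theta A s' i - theta A s i| := by
  have h : ‖Wv A s' i - Wv A s i‖ ^ 2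
      = 2 - 2 * Real.cos (theta A s' i - theta A s i) := by
    rw [norm_sub_sq_real, norm_Wv, norm_Wv, inner_Wv, if_pos rfl]
    ring
  have h2 := two_sub_two_cos_le (theta A s' i - theta A s i)
  calc ‖Wv A s' i - Wv A s i‖ = Real.sqrt (‖Wv A s' i - Wv A s i‖ ^ 2) :=
        (Real.sqrt_sq (norm_nonneg _)).symm
    _ ≤ Real.sqrt ((theta A s' i - theta A s i) ^ 2) := by
        apply Real.sqrt_le_sqrt; rw [h]; exact h2
    _ = |theta A s' i - theta A s i| := Real.sqrt_sq_eq_abs _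

/-- The parametrization `x ↦ (x, s A x)` of the graph. -/
noncomputable def Lmap (s : ℝ) :
    EuclideanSpace ℝ (Fin p) →ₗ[ℝ] EucProd p q :=
  (WithLp.linearEquiv 2 ℝ
    (EuclideanSpace ℝ (Fin p) × EuclideanSpace ℝ (Fin q))).symm.toLinearMap ∘ₗ
      (LinearMap.id.prod (s • A))

lemma Lmap_apply (s : ℝ) (x : EuclideanSpace ℝ (Fin p)) :
    Lmap A s x = (WithLp.equiv 2
      (EuclideanSpace ℝ (Fin p) × EuclideanSpace ℝ (Fin q))).symm (x, s • A x) := by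
  simp [Lmap, LinearMap.prod_apply]

lemma graphSub_eq_range (s : ℝ) :
    graphSub (s • A) = LinearMap.range (Lmap A s) := by
  rw [graphSub, LinearMap.graph_eq_range_prod]
  rw [Submodule.comap_equiv_eq_map_symm]
  rw [Lmap, LinearMap.range_comp]

lemma Wv_eq_smul_Lmap (s : ℝ) (i : Fin p) :
    Wv A s i = Real.cos (theta A s i) • Lmap A s (eb A i) := by
  rw [Wv, Lmap_apply]

lemma cos_theta_ne (s : ℝ) (i : Fin p) : Real.cos (theta A s i) ≠ 0 :=
  (Real.cos_arctan_pos _).ne'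

lemma Wv_mem (s : ℝ) (i : Fin p) : Wv A s i ∈ graphSub (s • A) := by
  rw [graphSub_eq_range, Wv_eq_smul_Lmap]
  exact Submodule.smul_mem _ _ (LinearMap.mem_range_self _ _)

lemma graphSub_le_span (s : ℝ) :
    graphSub (s • A) ≤ Submodule.span ℝ (Set.range (Wv A s)) := by
  rw [graphSub_eq_range]
  rintro z ⟨x, rfl⟩
  have hx := (eb A).sum_repr x
  rw [← hx, map_sum]
  apply Submodule.sum_mem
  intro i _
  rw [LinearMap.map_smul]
  apply Submodule.smul_mem
  have hL : Lmap A s (eb A i) = (Real.cos (theta A s i))⁻¹ • Wv A s i := by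
    rw [Wv_eq_smul_Lmap, inv_smul_smul₀ (cos_theta_ne A s i)]
  rw [hL]
  exact Submodule.smul_mem _ _ (Submodule.subset_span ⟨i, rfl⟩)

lemma proj_eq (s : ℝ) (x : EucProd p q) :
    projOnto (graphSub (s • A)) x = ∑ i, ⟪Wv A s i, x⟫ • Wv A s i := by
  have hmem : (∑ i, ⟪Wv A s i, x⟫ • Wv A s i) ∈ graphSub (s • A) :=
    Submodule.sum_mem _ fun i _ => Submodule.smul_mem _ _ (Wv_mem A s i)
  have hWj : ∀ j, ⟪x - ∑ i, ⟪Wv A s i, x⟫ • Wv A s i, Wv A s j⟫ = 0 := by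
    intro j
    rw [inner_sub_left, sum_inner]
    have hsum : ∑ i, ⟪⟪Wv A s i, x⟫ • Wv A s i, Wv A s j⟫ = ⟪Wv A s j, x⟫ := by
      have hterm : ∀ i, ⟪⟪Wv A s i, x⟫ • Wv A s i, Wv A s j⟫
          = if i = j then ⟪Wv A s i, x⟫ else 0 := by
        intro i
        rw [real_inner_smul_left, inner_Wv]
        rcases eq_or_ne i j with rfl | hij
        · simp
        · simp [hij]
      rw [Finset.sum_congr rfl fun i _ => hterm i, Finset.sum_ite_eq' Finset.univ j]
      simp
    rw [hsum, real_inner_comm, sub_self]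
  have horto : ∀ w ∈ graphSub (s • A),
      ⟪x - ∑ i, ⟪Wv A s i, x⟫ • Wv A s i, w⟫ = 0 := by
    intro w hw
    obtain ⟨c, rfl⟩ := (Submodule.mem_span_range_iff_exists_fun ℝ).1 (graphSub_le_span A s hw)
    rw [inner_sum]
    apply Finset.sum_eq_zero
    intro j _
    rw [real_inner_smul_right, hWj j, mul_zero]
  have h := Submodule.eq_starProjection_of_mem_of_inner_eq_zero hmem horto
  simpa [projOnto] using h

lemma opnorm_bound (s s' : ℝ) :
    ‖projOnto (graphSub (s' • A)) - projOnto (graphSub (s • A))‖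
      ≤ 2 * ∑ i, |theta A s' i - theta A s i| := by
  apply ContinuousLinearMap.opNorm_le_bound
  · positivity
  intro x
  rw [ContinuousLinearMap.sub_apply, proj_eq, proj_eq, ← Finset.sum_sub_distrib]
  calc ‖∑ i, (⟪Wv A s' i, x⟫ • Wv A s' i - ⟪Wv A s i, x⟫ • Wv A s i)‖
      ≤ ∑ i, ‖⟪Wv A s' i, x⟫ • Wv A s' i - ⟪Wv A s i, x⟫ • Wv A s i‖ :=
        norm_sum_le _ _
    _ ≤ ∑ i, 2 * |theta A s' i - theta A s i| * ‖x‖ := by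
        apply Finset.sum_le_sum
        intro i _
        have key : ⟪Wv A s' i, x⟫ • Wv A s' i - ⟪Wv A s i, x⟫ • Wv A s i
            = ⟪Wv A s' i - Wv A s i, x⟫ • Wv A s' i
              + ⟪Wv A s i, x⟫ • (Wv A s' i - Wv A s i) := by
          rw [inner_sub_left, sub_smul, smul_sub]
          abel
        have hx0 : (0:ℝ) ≤ ‖x‖ := norm_nonneg x
        have hd := norm_Wv_sub A s s' i
        have h1 : ‖⟪Wv A s' i - Wv A s i, x⟫ • Wv A s' i‖
            ≤ |theta A s' i - theta A s i| * ‖x‖ := by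
          rw [norm_smul, norm_Wv, mul_one, Real.norm_eq_abs]
          calc |⟪Wv A s' i - Wv A s i, x⟫| ≤ ‖Wv A s' i - Wv A s i‖ * ‖x‖ :=
                abs_real_inner_le_norm _ _
            _ ≤ |theta A s' i - theta A s i| * ‖x‖ :=
                mul_le_mul_of_nonneg_right hd hx0
        have h2 : ‖⟪Wv A s i, x⟫ • (Wv A s' i - Wv A s i)‖
            ≤ ‖x‖ * |theta A s' i - theta A s i| := by
          rw [norm_smul, Real.norm_eq_abs]
          have hc : |⟪Wv A s i, x⟫| ≤ ‖x‖ := by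
            have := abs_real_inner_le_norm (Wv A s i) x
            rwa [norm_Wv, one_mul] at this
          exact mul_le_mul hc hd (norm_nonneg _) hx0
        calc ‖⟪Wv A s' i, x⟫ • Wv A s' i - ⟪Wv A s i, x⟫ • Wv A s i‖
            = ‖⟪Wv A s' i - Wv A s i, x⟫ • Wv A s' i
              + ⟪Wv A s i, x⟫ • (Wv A s' i - Wv A s i)‖ := by rw [key]
          _ ≤ ‖⟪Wv A s' i - Wv A s i, x⟫ • Wv A s' i‖
              + ‖⟪Wv A s i, x⟫ • (Wv A s' i - Wv A s i)‖ := norm_add_le _ _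
          _ ≤ 2 * |theta A s' i - theta A s i| * ‖x‖ := by nlinarith
    _ = 2 * (∑ i, |theta A s' i - theta A s i|) * ‖x‖ := by
        rw [← Finset.sum_mul, Finset.mul_sum]

end MFT

end Aux

theorem multiplicative_flow_trajectories_have_uniformly_bounded_length (p q : ℕ) :
    ∃ C : ℝ, ∀ A : EuclideanSpace ℝ (Fin p) →ₗ[ℝ] EuclideanSpace ℝ (Fin q),
      ∀ (k : ℕ) (s : Fin (k + 1) → ℝ), StrictMono s →
        ∑ j : Fin k,
            ‖projOnto (graphSub (s j.succ • A)) - projOnto (graphSub (s j.castSucc • A))‖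
          ≤ C := by
  refine ⟨2 * (p * Real.pi), ?_⟩
  intro A k s hs
  have habs : ∀ (j : Fin k) (i : Fin p),
      |MFT.theta A (s j.succ) i - MFT.theta A (s j.castSucc) i|
        = MFT.theta A (s j.succ) i - MFT.theta A (s j.castSucc) i := by
    intro j i
    apply abs_of_nonneg
    have hle : s j.castSucc ≤ s j.succ := (hs (Fin.castSucc_lt_succ (i := j))).le
    exact sub_nonneg.2 (MFT.theta_mono A i hle)
  calc ∑ j : Fin k,
        ‖projOnto (graphSub (s j.succ • A)) - projOnto (graphSub (s j.castSucc • A))‖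
      ≤ ∑ j : Fin k, 2 * ∑ i : Fin p,
          (MFT.theta A (s j.succ) i - MFT.theta A (s j.castSucc) i) := by
        apply Finset.sum_le_sum
        intro j _
        have h := MFT.opnorm_bound A (s j.castSucc) (s j.succ)
        rwa [Finset.sum_congr rfl fun i _ => habs j i] at h
    _ = 2 * ∑ i : Fin p, ∑ j : Fin k,
          (MFT.theta A (s j.succ) i - MFT.theta A (s j.castSucc) i) := by
        rw [← Finset.mul_sum, Finset.sum_comm]
    _ = 2 * ∑ i : Fin p,
          (MFT.theta A (s (Fin.last k)) i - MFT.theta A (s 0) i) := by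
        congr 1
        exact Finset.sum_congr rfl fun i _ =>
          MFT.telescope k (fun j => MFT.theta A (s j) i)
    _ ≤ 2 * (p * Real.pi) := by
        have hb : ∀ i : Fin p,
            MFT.theta A (s (Fin.last k)) i - MFT.theta A (s 0) i ≤ Real.pi :=
          fun i => MFT.theta_sub_le A _ _ i
        have := Finset.sum_le_sum (fun i (_ : i ∈ Finset.univ) => hb i)
        have hcard : ∑ _i : Fin p, Real.pi = p * Real.pi := by
          simp [Finset.sum_const, mul_comm]
        nlinarith [this, hcard]
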